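/- arXiv:1010.4469 — 3 statements merged into one kernel-verified Lean document; each statement's English description precedes it below -/
import Mathlib

section
/- For any n ≥ 1, any positive integers i₁, …, iₙ and any positive integer i, the Lebesgue measure of the cylinder set {x ∈ (0,1) irrational : a₁(x)=i₁, …, aₙ(x)=iₙ, a_{n+1}(x)=i} equals P_i(s) times the Lebesgue measure of {x ∈ (0,1) irrational : a₁(x)=i₁, …, aₙ(x)=iₙ}, where s = [iₙ, i_{n-1}, …, i₁] is the finite continued fraction 1/(iₙ + 1/(i_{n-1} + ⋯ + 1/i₁)) and P_i(s) = (s+1)/((s+i)(s+i+1)). In particular, under Lebesgue measure the conditional probability that a_{n+1} = i given a₁, …, aₙ equals P_i(sₙ) with sₙ = [aₙ, …, a₁]. -/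
open MeasureTheory

/-- The Gauss map `τ(x) = 1/x − ⌊1/x⌋` (with `τ(0) = 0`, using `(0:ℝ)⁻¹ = 0`). -/
noncomputable def gaussMap (x : ℝ) : ℝ := Int.fract x⁻¹

/-- `cfDigit n x = ⌊1/τⁿ(x)⌋` is the `(n+1)`-st regular continued fraction digit
`a_{n+1}(x)` of `x`. -/
noncomputable def cfDigit (n : ℕ) (x : ℝ) : ℤ := ⌊(gaussMap^[n] x)⁻¹⌋

/-- The finite continued fraction `[x₁, …, xₙ] = 1/(x₁ + 1/(x₂ + ⋯ + 1/xₙ))`. -/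
noncomputable def cfVal : List ℕ+ → ℝ
  | [] => 0
  | a :: l => 1 / ((a : ℝ) + cfVal l)

namespace CFAux

/-- `ev [] t = t`, `ev (a::l) t = 1/(a + ev l t)`. -/
noncomputable def ev : List ℕ+ → ℝ → ℝ
  | [], t => t
  | a :: l, t => ((a : ℝ) + ev l t)⁻¹

/-- Coefficients of the Möbius transform `t ↦ (al + be*t)/(ga + de*t)` equal to `ev l`. -/
structure Co where
  al : ℕ
  be : ℕ
  ga : ℕ
  de : ℕ

def co : List ℕ+ → Co
  | [] => ⟨0, 1, 1, 0⟩
  | a :: l => ⟨(co l).ga, (co l).de, a * (co l).ga + (co l).al, a * (co l).de + (co l).be⟩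

lemma co_ineq (l : List ℕ+) :
    (1 : ℝ) ≤ (co l).ga ∧ ((co l).al : ℝ) ≤ (co l).ga ∧ ((co l).de : ℝ) ≤ (co l).ga ∧
      ((co l).al : ℝ) + (co l).be ≤ ((co l).ga : ℝ) + (co l).de ∧
      ((co l).be : ℝ) + (co l).de ≤ ((co l).al : ℝ) + (co l).ga := by
  induction l with
  | nil => norm_num [co]
  | cons a l ih =>
      obtain ⟨h1, h2, h3, h4, h5⟩ := ih
      have ha : (1 : ℝ) ≤ ((a : ℕ) : ℝ) := by exact_mod_cast a.pos
      have hal : (0 : ℝ) ≤ ((co l).al : ℝ) := Nat.cast_nonneg _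
      have hbe : (0 : ℝ) ≤ ((co l).be : ℝ) := Nat.cast_nonneg _
      have hde : (0 : ℝ) ≤ ((co l).de : ℝ) := Nat.cast_nonneg _
      have hkey : (0 : ℝ) ≤ (((a : ℕ) : ℝ) - 1) * (((co l).ga : ℝ) - (co l).de) :=
        mul_nonneg (by linarith) (by linarith)
      simp only [co]
      push_cast
      refine ⟨by nlinarith, by nlinarith, by nlinarith, by nlinarith, by nlinarith⟩

lemma co_ga_pos (l : List ℕ+) : (0 : ℝ) < (co l).ga := lt_of_lt_of_le one_pos (co_ineq l).1

lemma co_det (l : List ℕ+) :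
    ((co l).be : ℤ) * (co l).ga - (co l).al * (co l).de = (-1) ^ l.length := by
  induction l with
  | nil => simp [co]
  | cons a l ih =>
      simp only [co, List.length_cons, pow_succ]
      push_cast
      nlinarith [ih]

lemma den_pos (l : List ℕ+) {t : ℝ} (ht : 0 ≤ t) :
    0 < ((co l).ga : ℝ) + (co l).de * t := by
  have h1 := co_ga_pos l
  have hde : (0 : ℝ) ≤ ((co l).de : ℝ) := Nat.cast_nonneg _
  nlinarith

lemma ev_eq (l : List ℕ+) {t : ℝ} (ht : 0 ≤ t) :
    ev l t = (((co l).al : ℝ) + (co l).be * t) / (((co l).ga : ℝ) + (co l).de * t) := by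
  induction l with
  | nil => simp [ev, co]
  | cons a l ih =>
      have hd := den_pos l ht
      have ha : (0 : ℝ) < ((a : ℕ) : ℝ) := by exact_mod_cast a.pos
      have hnum : (0 : ℝ) ≤ ((co l).al : ℝ) + (co l).be * t :=
        add_nonneg (Nat.cast_nonneg _) (mul_nonneg (Nat.cast_nonneg _) ht)
      have hs : (0 : ℝ) < ((a : ℕ) : ℝ) +
          (((co l).al : ℝ) + (co l).be * t) / (((co l).ga : ℝ) + (co l).de * t) := by
        have := div_nonneg hnum hd.le
        linarith
      have hD : (0 : ℝ) < (((a : ℕ) : ℝ) * (co l).ga + (co l).al) +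
          (((a : ℕ) : ℝ) * (co l).de + (co l).be) * t := by nlinarith
      simp only [ev, ih, co]
      push_cast
      rw [eq_div_iff (ne_of_gt hD), inv_mul_eq_div, div_eq_iff (ne_of_gt hs)]
      field_simp
      try ring

lemma ev_nonneg (l : List ℕ+) {t : ℝ} (ht : 0 ≤ t) : 0 ≤ ev l t := by
  rw [ev_eq l ht]
  have h1 := den_pos l ht
  have hnum : (0 : ℝ) ≤ ((co l).al : ℝ) + (co l).be * t :=
    add_nonneg (Nat.cast_nonneg _) (mul_nonneg (Nat.cast_nonneg _) ht)
  positivity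

lemma ev_mem (l : List ℕ+) {t : ℝ} (ht : t ∈ Set.Icc (0 : ℝ) 1) :
    ev l t ∈ Set.Icc (0 : ℝ) 1 := by
  obtain ⟨ht0, ht1⟩ := ht
  refine ⟨ev_nonneg l ht0, ?_⟩
  rw [ev_eq l ht0, div_le_one (den_pos l ht0)]
  obtain ⟨h1, h2, h3, h4, h5⟩ := co_ineq l
  have hbe : (0 : ℝ) ≤ ((co l).be : ℝ) := Nat.cast_nonneg _
  have hde : (0 : ℝ) ≤ ((co l).de : ℝ) := Nat.cast_nonneg _
  nlinarith

lemma abs_det (l : List ℕ+) :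
    |((co l).be : ℝ) * (co l).ga - ((co l).al : ℝ) * (co l).de| = 1 := by
  have h := co_det l
  have h2 : ((co l).be : ℝ) * (co l).ga - ((co l).al : ℝ) * (co l).de = (-1 : ℝ) ^ l.length := by
    exact_mod_cast h
  rw [h2, abs_pow, abs_neg, abs_one, one_pow]

lemma ev_diff (l : List ℕ+) :
    |ev l 1 - ev l 0| = 1 / (((co l).ga : ℝ) * (((co l).ga : ℝ) + (co l).de)) := by
  rw [ev_eq l zero_le_one, ev_eq l le_rfl]
  have hga := co_ga_pos l
  have hde : (0 : ℝ) ≤ ((co l).de : ℝ) := Nat.cast_nonneg _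
  have hS : (0 : ℝ) < ((co l).ga : ℝ) + (co l).de := by linarith
  have key : (((co l).al : ℝ) + (co l).be * 1) / (((co l).ga : ℝ) + (co l).de * 1) -
      (((co l).al : ℝ) + (co l).be * 0) / (((co l).ga : ℝ) + (co l).de * 0) =
      (((co l).be : ℝ) * (co l).ga - ((co l).al : ℝ) * (co l).de) /
        (((co l).ga : ℝ) * (((co l).ga : ℝ) + (co l).de)) := by
    field_simp
    ring
  rw [key, abs_div, abs_det l, abs_of_pos (by positivity)]

lemma co_append (l : List ℕ+) (i : ℕ+) :
    co (l ++ [i]) =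
      ⟨(co l).al * i + (co l).be, (co l).al, (co l).ga * i + (co l).de, (co l).ga⟩ := by
  induction l with
  | nil =>
      show co [i] = _
      simp [co, mul_comm]
  | cons a l ih =>
      rw [List.cons_append]
      show (⟨(co (l ++ [i])).ga, (co (l ++ [i])).de, a * (co (l ++ [i])).ga + (co (l ++ [i])).al,
        a * (co (l ++ [i])).de + (co (l ++ [i])).be⟩ : Co) = _
      rw [ih, Co.mk.injEq]
      refine ⟨?_, ?_, ?_, ?_⟩ <;> simp only [co] <;> ring

lemma cfVal_reverse (l : List ℕ+) :
    cfVal l.reverse = ((co l).de : ℝ) / (co l).ga := by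
  induction l using List.reverseRecOn with
  | nil => simp [cfVal, co]
  | append_singleton l a ih =>
      rw [List.reverse_append]
      simp only [List.reverse_cons, List.reverse_nil, List.nil_append, List.singleton_append]
      rw [co_append]
      simp only [cfVal, ih]
      have hga := co_ga_pos l
      have hde : (0 : ℝ) ≤ ((co l).de : ℝ) := Nat.cast_nonneg _
      have ha : (0 : ℝ) < ((a : ℕ) : ℝ) := by exact_mod_cast a.pos
      push_cast
      have hga' : ((co l).ga : ℝ) ≠ 0 := ne_of_gt hga
      have h1 : ((co l).ga : ℝ) * ((a : ℕ) : ℝ) + (co l).de ≠ 0 := by nlinarith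
      have h2 : ((a : ℕ) : ℝ) + ((co l).de : ℝ) / (co l).ga ≠ 0 := by
        have : (0:ℝ) ≤ ((co l).de : ℝ) / (co l).ga := by positivity
        intro h; nlinarith
      field_simp
      try tauto
      try simp

/-- The key length-ratio identity. -/
lemma ratio (l : List ℕ+) (i : ℕ+) :
    |ev (l ++ [i]) 1 - ev (l ++ [i]) 0| =
      ((cfVal l.reverse + 1) / ((cfVal l.reverse + (i : ℝ)) * (cfVal l.reverse + (i : ℝ) + 1))) *
        |ev l 1 - ev l 0| := by
  rw [ev_diff, ev_diff, cfVal_reverse, co_append]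
  simp only
  have hga := co_ga_pos l
  have hde : (0 : ℝ) ≤ ((co l).de : ℝ) := Nat.cast_nonneg _
  have hi : (1 : ℝ) ≤ ((i : ℕ) : ℝ) := by exact_mod_cast i.pos
  push_cast
  have h1 : (0:ℝ) < ((co l).ga : ℝ) * (i : ℕ) + (co l).de := by nlinarith
  have h2 : (0:ℝ) < ((co l).de : ℝ) / (co l).ga + (i : ℕ) := by
    have : (0:ℝ) ≤ ((co l).de : ℝ) / (co l).ga := by positivity
    linarith
  field_simp
  ring

lemma minmax_inv {a u v : ℝ} (ha : 1 ≤ a) (hu : 0 ≤ u) (hv : 0 ≤ v) :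
    min (a + u)⁻¹ (a + v)⁻¹ = (a + max u v)⁻¹ ∧
      max (a + u)⁻¹ (a + v)⁻¹ = (a + min u v)⁻¹ := by
  rcases le_total u v with h | h
  · have h1 : (a + v)⁻¹ ≤ (a + u)⁻¹ := inv_anti₀ (by linarith) (by linarith)
    rw [max_eq_right h, min_eq_left h, min_eq_right h1, max_eq_left h1]
    exact ⟨rfl, rfl⟩
  · have h1 : (a + u)⁻¹ ≤ (a + v)⁻¹ := inv_anti₀ (by linarith) (by linarith)
    rw [max_eq_left h, min_eq_right h, min_eq_left h1, max_eq_right h1]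
    exact ⟨rfl, rfl⟩

lemma cyl (l : List ℕ+) :
    {x : ℝ | x ∈ Set.Ioo (0 : ℝ) 1 ∧ Irrational x ∧
        ∀ k : Fin l.length, cfDigit (k : ℕ) x = ((l.get k : ℕ) : ℤ)} =
      {x : ℝ | Irrational x ∧
        min (ev l 0) (ev l 1) < x ∧ x < max (ev l 0) (ev l 1)} := by
  induction l with
  | nil =>
      ext x
      simp only [Set.mem_setOf_eq, Set.mem_Ioo, ev]
      norm_num
      constructor
      · intro h; tauto
      · rintro ⟨hirr, h0, h1⟩
        exact ⟨⟨h0, h1⟩, hirr, fun k => k.elim0⟩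
  | cons a l ih =>
      have hu' := ev_mem l (show (0:ℝ) ∈ Set.Icc (0:ℝ) 1 by norm_num)
      have hv' := ev_mem l (show (1:ℝ) ∈ Set.Icc (0:ℝ) 1 by norm_num)
      set u := ev l 0 with hudef
      set v := ev l 1 with hvdef
      obtain ⟨hu0, hu1⟩ := hu'
      obtain ⟨hv0, hv1⟩ := hv'
      have ha : (1 : ℝ) ≤ ((a : ℕ) : ℝ) := by exact_mod_cast a.pos
      have hmm := minmax_inv ha hu0 hv0
      have hev0 : ev (a :: l) 0 = (((a : ℕ) : ℝ) + u)⁻¹ := rfl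
      have hev1 : ev (a :: l) 1 = (((a : ℕ) : ℝ) + v)⁻¹ := rfl
      have hminmax0 : (0:ℝ) ≤ min u v := le_min hu0 hv0
      have hminmax1 : max u v ≤ 1 := max_le hu1 hv1
      have hAmin : (0:ℝ) < ((a : ℕ) : ℝ) + min u v := by linarith
      have hAmax : (0:ℝ) < ((a : ℕ) : ℝ) + max u v := by
        have := le_max_left u v; linarith
      ext x
      simp only [Set.mem_setOf_eq, Set.mem_Ioo, hev0, hev1, hmm.1, hmm.2]
      constructor
      · rintro ⟨⟨hx0, hx1⟩, hirr, hdig⟩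
        have h0 : cfDigit 0 x = ((a : ℕ) : ℤ) := by
          have := hdig ⟨0, Nat.succ_pos _⟩
          simpa using this
        have hfl : ⌊x⁻¹⌋ = ((a : ℕ) : ℤ) := by
          simpa [cfDigit] using h0
        have hinv_irr : Irrational x⁻¹ := hirr.inv
        have hy : gaussMap x = x⁻¹ - ((a : ℕ) : ℝ) := by
          show x⁻¹ - (⌊x⁻¹⌋ : ℝ) = _
          rw [hfl]; norm_num
        have hyirr : Irrational (gaussMap x) := by
          rw [hy]
          exact_mod_cast hinv_irr.sub_intCast ((a : ℕ) : ℤ)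
        have hy0 : 0 < gaussMap x := by
          rw [gaussMap]
          exact Int.fract_pos.mpr (hinv_irr.ne_int _)
        have hy1 : gaussMap x < 1 := Int.fract_lt_one _
        have hdig' : ∀ k : Fin l.length, cfDigit (k : ℕ) (gaussMap x) = ((l.get k : ℕ) : ℤ) := by
          intro k
          have hk := hdig k.succ
          simpa [cfDigit, Function.iterate_succ_apply] using hk
        have hmem : min u v < gaussMap x ∧ gaussMap x < max u v :=
          ((Set.ext_iff.mp ih (gaussMap x)).mp ⟨⟨hy0, hy1⟩, hyirr, hdig'⟩).2
        have hxinv : x⁻¹ = ((a : ℕ) : ℝ) + gaussMap x := by rw [hy]; ring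
        have hxinvpos : (0:ℝ) < x⁻¹ := by positivity
        refine ⟨hirr, ?_, ?_⟩
        · have h := (inv_lt_inv₀ hAmax hxinvpos).mpr (by rw [hxinv]; linarith [hmem.2])
          rwa [inv_inv] at h
        · have h := (inv_lt_inv₀ hxinvpos hAmin).mpr (by rw [hxinv]; linarith [hmem.1])
          rwa [inv_inv] at h
      · rintro ⟨hirr, hlt1, hlt2⟩
        have hx0 : 0 < x := lt_trans (by positivity) hlt1
        have hlow : ((a : ℕ) : ℝ) + min u v < x⁻¹ := by
          have h := (inv_lt_inv₀ (by positivity) hx0).mpr hlt2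
          rwa [inv_inv] at h
        have hup : x⁻¹ < ((a : ℕ) : ℝ) + max u v := by
          have h := (inv_lt_inv₀ hx0 (by positivity)).mpr hlt1
          rwa [inv_inv] at h
        have hx1 : x < 1 := by
          have h1 : (((a : ℕ) : ℝ) + min u v)⁻¹ ≤ 1 := by
            rw [show (1:ℝ) = (1:ℝ)⁻¹ by norm_num]
            exact inv_anti₀ one_pos (by linarith)
          linarith
        have hfl : ⌊x⁻¹⌋ = ((a : ℕ) : ℤ) := by
          rw [Int.floor_eq_iff]
          constructor
          · push_cast; linarith
          · push_cast; linarith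
        have hinv_irr : Irrational x⁻¹ := hirr.inv
        have hy : gaussMap x = x⁻¹ - ((a : ℕ) : ℝ) := by
          show x⁻¹ - (⌊x⁻¹⌋ : ℝ) = _
          rw [hfl]; norm_num
        have hyirr : Irrational (gaussMap x) := by
          rw [hy]
          exact_mod_cast hinv_irr.sub_intCast ((a : ℕ) : ℤ)
        have hmemy : min u v < gaussMap x ∧ gaussMap x < max u v := by
          rw [hy]; constructor <;> linarith
        have hdig' := ((Set.ext_iff.mp ih (gaussMap x)).mpr ⟨hyirr, hmemy⟩).2.2
        refine ⟨⟨hx0, hx1⟩, hirr, ?_⟩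
        intro k
        refine Fin.cases ?_ ?_ k
        · simpa [cfDigit] using hfl
        · intro j
          have := hdig' j
          simpa [cfDigit, Function.iterate_succ_apply] using this

lemma cfVal_nonneg (l : List ℕ+) : 0 ≤ cfVal l := by
  induction l with
  | nil => simp [cfVal]
  | cons a l ih =>
      have ha : (0 : ℝ) < ((a : ℕ) : ℝ) := by exact_mod_cast a.pos
      rw [cfVal]
      positivity

lemma vol_irr (u v : ℝ) :
    volume {x : ℝ | Irrational x ∧ min u v < x ∧ x < max u v} = ENNReal.ofReal |v - u| := by
  have hset : {x : ℝ | Irrational x ∧ min u v < x ∧ x < max u v} =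
      Set.Ioo (min u v) (max u v) \ Set.range ((↑) : ℚ → ℝ) := by
    ext x
    simp only [Set.mem_setOf_eq, Set.mem_diff, Set.mem_Ioo]
    constructor
    · rintro ⟨h1, h2, h3⟩; exact ⟨⟨h2, h3⟩, h1⟩
    · rintro ⟨⟨h2, h3⟩, h1⟩; exact ⟨h1, h2, h3⟩
  rw [hset, measure_diff_null ((Set.countable_range _).measure_zero _), Real.volume_Ioo]
  exact congrArg ENNReal.ofReal (max_sub_min_eq_abs u v)

end CFAux

/-- For any `n ≥ 1`, positive integers `i₁, …, iₙ` and a positive integer `i`, the Lebesgue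
measure of the cylinder `{x ∈ (0,1) irrational : a₁(x)=i₁, …, aₙ(x)=iₙ, a_{n+1}(x)=i}` equals
`P_i(s)` times the Lebesgue measure of `{x ∈ (0,1) irrational : a₁(x)=i₁, …, aₙ(x)=iₙ}`,
where `s = [iₙ, …, i₁]` and `P_i(s) = (s+1)/((s+i)(s+i+1))`. -/
theorem volume_cylinder_succ (n : ℕ) (hn : 1 ≤ n) (d : Fin n → ℕ+) (i : ℕ+)
    (s : ℝ) (hs : s = cfVal ((List.ofFn d).reverse)) :
    volume {x : ℝ | x ∈ Set.Ioo (0 : ℝ) 1 ∧ Irrational x ∧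
        (∀ k : Fin n, cfDigit (k : ℕ) x = ((d k : ℕ) : ℤ)) ∧ cfDigit n x = ((i : ℕ) : ℤ)} =
      ENNReal.ofReal ((s + 1) / ((s + (i : ℝ)) * (s + (i : ℝ) + 1))) *
        volume {x : ℝ | x ∈ Set.Ioo (0 : ℝ) 1 ∧ Irrational x ∧
          ∀ k : Fin n, cfDigit (k : ℕ) x = ((d k : ℕ) : ℤ)} := by
  classical
  have hlen : (List.ofFn d).length = n := List.length_ofFn
  have hlen2 : ((List.ofFn d) ++ [i]).length = n + 1 := by
    rw [List.length_append, hlen]; rfl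
  have h1 : {x : ℝ | x ∈ Set.Ioo (0 : ℝ) 1 ∧ Irrational x ∧
        (∀ k : Fin n, cfDigit (k : ℕ) x = ((d k : ℕ) : ℤ)) ∧ cfDigit n x = ((i : ℕ) : ℤ)} =
      {x : ℝ | x ∈ Set.Ioo (0 : ℝ) 1 ∧ Irrational x ∧
        ∀ k : Fin ((List.ofFn d) ++ [i]).length,
          cfDigit (k : ℕ) x = ((((List.ofFn d) ++ [i]).get k : ℕ) : ℤ)} := by
    ext x
    simp only [Set.mem_setOf_eq]
    refine and_congr_right fun _ => and_congr_right fun _ => ?_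
    constructor
    · rintro ⟨hd, hni⟩ k
      rcases lt_or_ge (k : ℕ) n with hk | hk
      · have hkl : (k : ℕ) < (List.ofFn d).length := by rw [hlen]; exact hk
        rw [List.get_eq_getElem, List.getElem_append_left hkl, List.getElem_ofFn]
        exact hd ⟨k, hk⟩
      · have hkn : (k : ℕ) = n := by
          have h' := k.isLt
          omega
        have hge : (List.ofFn d).length ≤ (k : ℕ) := by rw [hlen]; exact hk
        rw [List.get_eq_getElem, List.getElem_append_right hge]
        simp only [hlen, hkn, Nat.sub_self, List.getElem_singleton]
        exact hni
    · intro h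
      constructor
      · intro k
        have hkl : (k : ℕ) < ((List.ofFn d) ++ [i]).length := by rw [hlen2]; omega
        have hk := h ⟨k, hkl⟩
        rw [List.get_eq_getElem, List.getElem_append_left (by rw [hlen]; exact k.isLt),
          List.getElem_ofFn] at hk
        simpa using hk
      · have hnl : n < ((List.ofFn d) ++ [i]).length := by rw [hlen2]; omega
        have hk := h ⟨n, hnl⟩
        rw [List.get_eq_getElem, List.getElem_append_right (by rw [hlen])] at hk
        simpa [hlen] using hk
  have h2 : {x : ℝ | x ∈ Set.Ioo (0 : ℝ) 1 ∧ Irrational x ∧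
        ∀ k : Fin n, cfDigit (k : ℕ) x = ((d k : ℕ) : ℤ)} =
      {x : ℝ | x ∈ Set.Ioo (0 : ℝ) 1 ∧ Irrational x ∧
        ∀ k : Fin (List.ofFn d).length,
          cfDigit (k : ℕ) x = (((List.ofFn d).get k : ℕ) : ℤ)} := by
    ext x
    simp only [Set.mem_setOf_eq]
    refine and_congr_right fun _ => and_congr_right fun _ => ?_
    constructor
    · intro h k
      rw [List.get_eq_getElem, List.getElem_ofFn]
      exact h ⟨(k : ℕ), by have := k.isLt; omega⟩
    · intro h k
      have hkl : (k : ℕ) < (List.ofFn d).length := by rw [hlen]; exact k.isLt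
      have hk := h ⟨k, hkl⟩
      rw [List.get_eq_getElem, List.getElem_ofFn] at hk
      simpa using hk
  rw [h1, h2, CFAux.cyl, CFAux.cyl, CFAux.vol_irr, CFAux.vol_irr, CFAux.ratio, ← hs]
  have hs0 : 0 ≤ s := hs ▸ CFAux.cfVal_nonneg _
  have hi : (1 : ℝ) ≤ ((i : ℕ) : ℝ) := by exact_mod_cast i.pos
  have hP : 0 ≤ (s + 1) / ((s + (i : ℝ)) * (s + (i : ℝ) + 1)) := by
    apply div_nonneg (by linarith)
    apply mul_nonneg <;> linarith
  rw [ENNReal.ofReal_mul hP]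
end

section
/- The Gauss measure is stationary for the transition kernel of the chain sₙ: for every u with 0 < u ≤ 1, ∫₀¹ Q(x, [0,u)) γ(dx) = γ([0,u)) = log(1+u)/log 2, where Q(x, [0,u)) = ∑_{i ≥ 1, 1/(x+i) < u} (x+1)/((x+i)(x+i+1)). -/
open MeasureTheory
open scoped ENNReal NNReal


private lemma telescope_hasSum (g : ℕ → ℝ) (hg : ∀ m, g (m+1) ≤ g m)
    (hlim : Filter.Tendsto g Filter.atTop (nhds 0)) :
    HasSum (fun m => g m - g (m+1)) (g 0) := by
  rw [hasSum_iff_tendsto_nat_of_nonneg (fun m => sub_nonneg.mpr (hg m))]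
  simp only [Finset.sum_range_sub' g]
  simpa using Filter.Tendsto.const_sub (g 0) hlim

private lemma hasSum_tail (u x : ℝ) (hu : 0 < u) (hx : 0 < x) (k : ℕ) (hk : 1 ≤ k)
    (h1 : 1/u < x + k) (h2 : x + (k:ℝ) - 1 < 1/u) :
    HasSum (fun i : ℕ+ => if 1 / (x + (i:ℝ)) < u then
      (x + 1) / ((x + (i:ℝ)) * (x + (i:ℝ) + 1)) else 0) ((x+1)/(x+k)) := by
  have hxi : ∀ i : ℕ+, 0 < x + (i:ℝ) := fun i => by
    have : (0:ℝ) < (i:ℝ) := by exact_mod_cast i.pos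
    linarith
  have hcond : ∀ i : ℕ+, (1 / (x + (i:ℝ)) < u ↔ k ≤ (i:ℕ)) := by
    intro i
    rw [one_div_lt (hxi i) hu]
    constructor
    · intro h
      by_contra hc
      push_neg at hc
      have : (i:ℝ) ≤ (k:ℝ) - 1 := by
        have h3 : (i:ℕ) + 1 ≤ k := hc
        have := (Nat.cast_le (α := ℝ)).mpr h3
        push_cast at this ⊢
        linarith
      linarith
    · intro h
      have : (k:ℝ) ≤ (i:ℝ) := by exact_mod_cast h
      linarith
  have hfun : (fun i : ℕ+ => if 1 / (x + (i:ℝ)) < u then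
      (x + 1) / ((x + (i:ℝ)) * (x + (i:ℝ) + 1)) else 0)
      = fun i : ℕ+ => if k ≤ (i:ℕ) then (x + 1) / ((x + (i:ℝ)) * (x + (i:ℝ) + 1)) else 0 :=
    funext fun i => if_congr (hcond i) rfl rfl
  rw [hfun]
  set e : ℕ → ℕ+ := fun m => ⟨k + m, by omega⟩ with he
  have hinj : Function.Injective e := by
    intro a b h
    have : k + a = k + b := congrArg (fun p : ℕ+ => (p:ℕ)) h
    omega
  refine (Function.Injective.hasSum_iff hinj ?_).mp ?_
  · intro i hi
    rw [if_neg]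
    intro hki
    exact hi ⟨(i:ℕ) - k, by apply PNat.coe_injective; simp [he]; omega⟩
  · have hcomp : ((fun i : ℕ+ => if k ≤ (i:ℕ) then (x + 1) / ((x + (i:ℝ)) * (x + (i:ℝ) + 1)) else 0) ∘ e)
        = fun m : ℕ => (x+1)/(x + ((k:ℝ)+m)) - (x+1)/(x + ((k:ℝ)+(m+1))) := by
      funext m
      show (if k ≤ (((k + m : ℕ)) : ℕ) then
          (x + 1) / ((x + ((k + m : ℕ):ℝ)) * (x + ((k + m : ℕ):ℝ) + 1)) else 0) = _
      rw [if_pos (Nat.le_add_right k m)]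
      have hd1 : (0:ℝ) < x + ((k:ℝ)+m) := by positivity
      have hd2 : (0:ℝ) < x + ((k:ℝ)+(m+1)) := by linarith
      push_cast
      field_simp
      ring
    rw [hcomp]
    have key := telescope_hasSum (fun m : ℕ => (x+1)/(x + ((k:ℝ)+m)))
      (fun m => by
        apply div_le_div_of_nonneg_left (by linarith) (by positivity)
        push_cast; linarith)
      (by
        apply Filter.Tendsto.div_atTop tendsto_const_nhds
        apply Filter.tendsto_atTop_add_const_left
        apply Filter.tendsto_atTop_add_const_left
        exact tendsto_natCast_atTop_atTop)
    simpa using key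

/-- generic log integral -/
private lemma Igen (a e d : ℝ) (had : 0 < a + d) (hae : a ≤ e) :
    ∫ x in a..e, 1/(x+d) = Real.log (e+d) - Real.log (a+d) := by
  have hpos : ∀ x ∈ Set.uIcc a e, 0 < x + d := by
    intro x hx
    rw [Set.uIcc_of_le hae] at hx
    linarith [hx.1]
  have hderiv : ∀ x ∈ Set.uIcc a e, HasDerivAt (fun y => Real.log (y + d)) (1/(x+d)) x := by
    intro x hx
    have h1 : HasDerivAt (fun y : ℝ => y + d) 1 x := (hasDerivAt_id x).add_const d
    have := (Real.hasDerivAt_log (ne_of_gt (hpos x hx))).comp x h1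
    simpa [one_div, Function.comp_def] using this
  have hint : IntervalIntegrable (fun x => 1/(x+d)) volume a e := by
    apply ContinuousOn.intervalIntegrable
    apply ContinuousOn.div continuousOn_const (by fun_prop)
    exact fun x hx => ne_of_gt (hpos x hx)
  exact intervalIntegral.integral_eq_sub_of_hasDerivAt hderiv hint


/-- The Gauss measure `γ(A) = (1/log 2) ∫_A dx/(x+1)` on Borel subsets of `[0,1]`. -/
noncomputable def gaussMeasure : Measure ℝ :=
  (volume.restrict (Set.Icc (0 : ℝ) 1)).withDensity
    (fun x => ENNReal.ofReal ((1 / Real.log 2) * (1 / (x + 1))))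

/-- The Gauss measure is stationary for the transition kernel `Q` of the chain `(sₙ)`:
for `0 < u ≤ 1`, `∫₀¹ Q(x,[0,u)) γ(dx) = γ([0,u)) = log(1+u)/log 2`, where
`Q(x,[0,u)) = ∑_{i ≥ 1, 1/(x+i) < u} (x+1)/((x+i)(x+i+1))`. -/
theorem gaussMeasure_stationary_for_Q (u : ℝ) (hu : 0 < u) (hu1 : u ≤ 1) :
    (∫ x, (∑' i : ℕ+, if 1 / (x + (i : ℝ)) < u then
        (x + 1) / ((x + (i : ℝ)) * (x + (i : ℝ) + 1)) else 0) ∂gaussMeasure) =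
      Real.log (1 + u) / Real.log 2 ∧
    gaussMeasure (Set.Ico (0 : ℝ) u) = ENNReal.ofReal (Real.log (1 + u) / Real.log 2) := by
  constructor
  · have hlog2 : (0:ℝ) < Real.log 2 := Real.log_pos one_lt_two
    have ht1 : 1 ≤ 1/u := by rw [le_div_iff₀ hu]; linarith
    have ht0 : (0:ℝ) < 1/u := by positivity
    set t : ℝ := 1/u with htdef
    set n : ℕ := ⌈t⌉₊ with hndef
    have hn1 : 1 ≤ n := Nat.one_le_ceil_iff.mpr ht0
    have hn1R : (1:ℝ) ≤ (n:ℝ) := by exact_mod_cast hn1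
    have htn : t ≤ (n:ℝ) := Nat.le_ceil t
    have hnt : (n:ℝ) < t + 1 := Nat.ceil_lt_add_one ht0.le
    set b : ℝ := t - n + 1 with hbdef
    have hb0 : 0 < b := by rw [hbdef]; linarith
    have hb1 : b ≤ 1 := by rw [hbdef]; linarith
    set ψ : ℝ → ℝ := fun x => if x < b then 1/(x+(n:ℝ)) else 1/(x+((n:ℝ)-1)) with hψ
    have hmeas : Measurable fun x : ℝ => (1 / Real.log 2 * (1 / (x + 1))).toNNReal := by
      apply Measurable.real_toNNReal
      fun_prop
    have hrw : gaussMeasure = (volume.restrict (Set.Icc (0:ℝ) 1)).withDensity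
        (fun x => ((1 / Real.log 2 * (1 / (x + 1))).toNNReal : ℝ≥0∞)) := rfl
    rw [hrw, integral_withDensity_eq_integral_smul hmeas]
    have hbne : ∀ᵐ x : ℝ ∂(volume.restrict (Set.Icc (0:ℝ) 1)), x ∉ ({0, b} : Set ℝ) := by
      apply ae_restrict_of_ae
      have h0 : volume ({0, b} : Set ℝ) = 0 :=
        Set.Countable.measure_zero (Set.Countable.insert 0 (Set.countable_singleton b)) volume
      rw [ae_iff]
      refine measure_mono_null (fun x hx => ?_) h0
      simp only [Set.mem_setOf_eq, not_not] at hx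
      simpa using hx
    trans (∫ x in Set.Icc (0:ℝ) 1, 1 / Real.log 2 * ψ x)
    · apply integral_congr_ae
      filter_upwards [ae_restrict_mem measurableSet_Icc, hbne] with x hx hxnot
      simp only [Set.mem_insert_iff, Set.mem_singleton_iff, not_or] at hxnot
      obtain ⟨hx0', hxb⟩ := hxnot
      have hx0 : 0 < x := lt_of_le_of_ne hx.1 (Ne.symm hx0')
      have hx1 : x ≤ 1 := hx.2
      have hcoe : ∀ r : ℝ, 0 ≤ r → ((r.toNNReal : ℝ≥0) : ℝ) = r := fun r hr => Real.coe_toNNReal r hr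
      have hden : (0:ℝ) ≤ 1 / Real.log 2 * (1 / (x + 1)) := by positivity
      rw [NNReal.smul_def, hcoe _ hden]
      rcases lt_or_gt_of_ne hxb with hlt | hgt
      · have hs := hasSum_tail u x hu hx0 n hn1 (by rw [← htdef]; linarith)
          (by rw [← htdef]; linarith [hlt, hbdef])
        rw [hs.tsum_eq, hψ]
        simp only [if_pos hlt]
        have h1 : x + 1 ≠ 0 := by linarith
        have h2 : x + (n:ℝ) ≠ 0 := ne_of_gt (by linarith)
        have h3 : Real.log 2 ≠ 0 := ne_of_gt hlog2
        rw [smul_eq_mul]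
        field_simp
      · have hn2 : 2 ≤ n := by
          have hbx : b < 1 := lt_of_lt_of_le hgt hx1
          have h3 : t < (n:ℝ) := by linarith [hbdef]
          have h4 : (1:ℝ) < (n:ℝ) := lt_of_le_of_lt ht1 h3
          have : 1 < n := by exact_mod_cast h4
          omega
        have hcast : ((n-1:ℕ):ℝ) = (n:ℝ) - 1 := by
          rw [Nat.cast_sub hn1]; norm_num
        have hs := hasSum_tail u x hu hx0 (n-1) (by omega)
          (by rw [hcast, ← htdef]; linarith [hgt, hbdef])
          (by rw [hcast, ← htdef]; linarith [hx1, hnt])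
        rw [hs.tsum_eq, hcast, hψ]
        simp only [if_neg (not_lt.mpr hgt.le)]
        have h1 : x + 1 ≠ 0 := by linarith
        have h2 : x + ((n:ℝ) - 1) ≠ 0 := ne_of_gt (by linarith)
        have h3 : Real.log 2 ≠ 0 := ne_of_gt hlog2
        rw [smul_eq_mul]
        field_simp
    · rw [integral_const_mul]
      have hψval : ∫ x in Set.Icc (0:ℝ) 1, ψ x = Real.log (1+u) := by
        have hcont1 : IntegrableOn (fun x : ℝ => 1/(x+(n:ℝ))) (Set.Icc 0 b) volume := by
          apply ContinuousOn.integrableOn_Icc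
          apply ContinuousOn.div continuousOn_const (by fun_prop)
          intro x hx
          have := hx.1
          intro h; linarith
        have hcont2 : IntegrableOn (fun x : ℝ => 1/(x+((n:ℝ)-1))) (Set.Icc b 1) volume := by
          apply ContinuousOn.integrableOn_Icc
          apply ContinuousOn.div continuousOn_const (by fun_prop)
          intro x hx
          have := hx.1
          intro h; linarith
        have hae1 : (fun x : ℝ => 1/(x+(n:ℝ))) =ᵐ[volume.restrict (Set.Ioc 0 b)] ψ := by
          have hbne' : ∀ᵐ x : ℝ ∂(volume.restrict (Set.Ioc 0 b)), x ≠ b := by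
            apply ae_restrict_of_ae
            rw [ae_iff]
            refine measure_mono_null (fun x hx => ?_) (Real.volume_singleton (a := b))
            simp only [Set.mem_setOf_eq, not_not] at hx
            simpa using hx
          filter_upwards [ae_restrict_mem measurableSet_Ioc, hbne'] with x hx hxb
          rw [hψ]
          simp only [if_pos (lt_of_le_of_ne hx.2 hxb)]
        have heq2 : Set.EqOn ψ (fun x : ℝ => 1/(x+((n:ℝ)-1))) (Set.Ioc b 1) := by
          intro x hx
          rw [hψ]
          simp only [if_neg (not_lt.mpr hx.1.le)]
        have hae2 : (fun x : ℝ => 1/(x+((n:ℝ)-1))) =ᵐ[volume.restrict (Set.Ioc b 1)] ψ := by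
          filter_upwards [ae_restrict_mem measurableSet_Ioc] with x hx
          exact (heq2 hx).symm
        rw [integral_Icc_eq_integral_Ioc, ← Set.Ioc_union_Ioc_eq_Ioc hb0.le hb1,
          setIntegral_union (Set.Ioc_disjoint_Ioc_of_le le_rfl) measurableSet_Ioc
            ((hcont1.mono_set Set.Ioc_subset_Icc_self).congr hae1)
            ((hcont2.mono_set Set.Ioc_subset_Icc_self).congr hae2),
          ← integral_congr_ae hae1, ← integral_congr_ae hae2,
          ← intervalIntegral.integral_of_le hb0.le, ← intervalIntegral.integral_of_le hb1,
          Igen 0 b (n:ℝ) (by linarith) hb0.le, Igen b 1 ((n:ℝ)-1) (by linarith) hb1]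
        have e1 : b + (n:ℝ) = t+1 := by rw [hbdef]; ring
        have e2 : (0:ℝ)+(n:ℝ) = (n:ℝ) := by ring
        have e3 : 1+((n:ℝ)-1) = (n:ℝ) := by ring
        have e4 : b + ((n:ℝ)-1) = t := by rw [hbdef]; ring
        rw [e1, e2, e3, e4]
        have hmul : t+1 = (1+u)*t := by rw [htdef]; field_simp
        rw [hmul, Real.log_mul (by positivity) (ne_of_gt ht0)]
        ring
      rw [hψval, one_div_mul_eq_div]
  · have hlog2 : (0:ℝ) < Real.log 2 := Real.log_pos one_lt_two
    have hsub : Set.Ico (0:ℝ) u ⊆ Set.Icc 0 1 :=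
      fun x hx => ⟨hx.1, le_trans (le_of_lt hx.2) hu1⟩
    have hint : IntegrableOn (fun x : ℝ => 1 / Real.log 2 * (1 / (x + 1))) (Set.Ico 0 u) volume := by
      have hc : IntegrableOn (fun x : ℝ => 1 / Real.log 2 * (1 / (x + 1))) (Set.Icc 0 u) volume := by
        apply ContinuousOn.integrableOn_Icc
        apply ContinuousOn.mul continuousOn_const
        apply ContinuousOn.div continuousOn_const (by fun_prop)
        intro x hx; have := hx.1; intro h; linarith
      exact hc.mono_set Set.Ico_subset_Icc_self
    have hnn : 0 ≤ᵐ[volume.restrict (Set.Ico (0:ℝ) u)]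
        (fun x : ℝ => 1 / Real.log 2 * (1 / (x + 1))) := by
      filter_upwards [ae_restrict_mem measurableSet_Ico] with x hx
      have := hx.1
      positivity
    rw [gaussMeasure, withDensity_apply _ measurableSet_Ico,
      Measure.restrict_restrict measurableSet_Ico, Set.inter_eq_self_of_subset_left hsub,
      ← ofReal_integral_eq_lintegral_ofReal hint hnn]
    congr 1
    rw [integral_Ico_eq_integral_Ioo, ← integral_Ioc_eq_integral_Ioo, ← intervalIntegral.integral_of_le hu.le,
      intervalIntegral.integral_const_mul]
    have := Igen 0 u 1 (by norm_num) hu.le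
    rw [this]
    norm_num
    rw [add_comm u 1]
    ring
end

section
/- The Gauss measure is invariant for the Markov operator U: for every bounded Borel measurable function f on [0,1], ∫₀¹ Uf(x) γ(dx) = ∫₀¹ f(x) γ(dx), where Uf(x) = ∑_{i=1}^∞ P_i(x) f(1/(x+i)). -/
open MeasureTheory
open scoped NNReal ENNReal

/-- The Markov operator `Uf(x) = ∑_{i=1}^∞ P_i(x) f(1/(x+i))` with
`P_i(x) = (x+1)/((x+i)(x+i+1))`. -/
noncomputable def Uop (f : ℝ → ℝ) : ℝ → ℝ :=
  fun x => ∑' i : ℕ+, (x + 1) / ((x + (i : ℝ)) * (x + (i : ℝ) + 1)) * f (1 / (x + (i : ℝ)))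

lemma pnat_pos_real (i : ℕ+) : (0:ℝ) < i := by exact_mod_cast i.pos
lemma pnat_one_le_real (i : ℕ+) : (1:ℝ) ≤ i := by exact_mod_cast i.one_le

lemma image_inv_shift (i : ℕ+) :
    (fun x : ℝ => (x + (i:ℝ))⁻¹) '' Set.Icc 0 1 = Set.Icc ((i:ℝ)+1)⁻¹ ((i:ℝ))⁻¹ := by
  have hi := pnat_pos_real i
  ext u
  constructor
  · rintro ⟨x, hx, rfl⟩
    obtain ⟨hx0, hx1⟩ := hx
    exact ⟨inv_anti₀ (by linarith) (by linarith), inv_anti₀ hi (by linarith)⟩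
  · rintro ⟨hu1, hu2⟩
    have hup : 0 < u := lt_of_lt_of_le (by positivity) hu1
    have h1 : (i:ℝ) ≤ u⁻¹ := by
      have := inv_anti₀ hup hu2
      rwa [inv_inv] at this
    have h2 : u⁻¹ ≤ (i:ℝ) + 1 := by
      have := inv_anti₀ (by positivity : (0:ℝ) < ((i:ℝ)+1)⁻¹) hu1
      rwa [inv_inv] at this
    exact ⟨u⁻¹ - i, ⟨by linarith, by linarith⟩, by simp [sub_add_cancel, inv_inv]⟩

lemma subst_lemma (f : ℝ → ℝ) (i : ℕ+) :
    ∫ x in Set.Icc (0:ℝ) 1, ((x + (i:ℝ)) * (x + (i:ℝ) + 1))⁻¹ * f ((x + (i:ℝ))⁻¹)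
      = ∫ u in Set.Icc ((i:ℝ)+1)⁻¹ ((i:ℝ))⁻¹, f u / (1 + u) := by
  have hi := pnat_pos_real i
  have hderiv : ∀ x ∈ Set.Icc (0:ℝ) 1,
      HasDerivWithinAt (fun x : ℝ => (x + (i:ℝ))⁻¹) (-1 / (x + (i:ℝ)) ^ 2) (Set.Icc 0 1) x := by
    intro x hx
    have hne : x + (i:ℝ) ≠ 0 := by have := hx.1; positivity
    exact (((hasDerivAt_id x).add_const (i:ℝ)).inv hne).hasDerivWithinAt
  have hinj : Set.InjOn (fun x : ℝ => (x + (i:ℝ))⁻¹) (Set.Icc 0 1) := by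
    intro a _ b _ hab
    have := inv_injective hab
    linarith [this]
  rw [← image_inv_shift i,
    integral_image_eq_integral_abs_deriv_smul measurableSet_Icc hderiv hinj]
  apply setIntegral_congr_fun measurableSet_Icc
  intro x hx
  have h0 : (0:ℝ) < x + i := by have := hx.1; positivity
  have h1 : (0:ℝ) < x + i + 1 := by linarith
  simp only [smul_eq_mul]
  rw [abs_div, abs_neg, abs_one, abs_of_pos (by positivity : (0:ℝ) < (x + (i:ℝ))^2)]
  field_simp

lemma iUnion_Ioc_eq : (⋃ i : ℕ+, Set.Ioc ((i:ℝ)+1)⁻¹ ((i:ℝ))⁻¹) = Set.Ioc (0:ℝ) 1 := by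
  ext u
  simp only [Set.mem_iUnion, Set.mem_Ioc]
  constructor
  · rintro ⟨i, h1, h2⟩
    have hi := pnat_pos_real i
    have hone : (1:ℝ) ≤ i := pnat_one_le_real i
    exact ⟨lt_trans (by positivity) h1, h2.trans (by rw [inv_le_one_iff₀]; right; exact hone)⟩
  · rintro ⟨hu0, hu1⟩
    have hinv1 : (1:ℝ) ≤ u⁻¹ := (one_le_inv₀ hu0).2 hu1
    set n : ℕ := ⌊u⁻¹⌋₊ with hn
    have hn1 : 1 ≤ n := by
      rw [hn, Nat.one_le_iff_ne_zero, ← Nat.pos_iff_ne_zero, Nat.floor_pos]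
      exact hinv1
    refine ⟨⟨n, hn1⟩, ?_, ?_⟩
    · have hlt : u⁻¹ < (n:ℝ) + 1 := Nat.lt_floor_add_one _
      have hnpos : (0:ℝ) < n := by exact_mod_cast hn1
      calc ((((⟨n, hn1⟩ : ℕ+) :ℕ):ℝ) + 1)⁻¹ < (u⁻¹)⁻¹ := by
            apply inv_strictAnti₀ (by positivity)
            simpa using hlt
        _ = u := inv_inv u
    · have hle : (n:ℝ) ≤ u⁻¹ := Nat.floor_le (by positivity)
      have hnpos : (0:ℝ) < n := by exact_mod_cast hn1
      calc u = (u⁻¹)⁻¹ := (inv_inv u).symm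
        _ ≤ ((((⟨n, hn1⟩ : ℕ+) :ℕ):ℝ))⁻¹ := by
            apply inv_anti₀ (by simpa using hnpos)
            simpa using hle

lemma pairwise_disjoint_Ioc :
    Pairwise (Function.onFun Disjoint fun i : ℕ+ => Set.Ioc ((i:ℝ)+1)⁻¹ ((i:ℝ))⁻¹) := by
  have H : ∀ i j : ℕ+, i < j →
      Disjoint (Set.Ioc ((i:ℝ)+1)⁻¹ ((i:ℝ))⁻¹) (Set.Ioc ((j:ℝ)+1)⁻¹ ((j:ℝ))⁻¹) := by
    intro i j hij
    rw [Set.disjoint_left]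
    rintro u ⟨hi1, _⟩ ⟨_, hj2⟩
    have hcast : (i:ℝ) + 1 ≤ (j:ℝ) := by exact_mod_cast hij
    have : ((j:ℝ))⁻¹ ≤ ((i:ℝ)+1)⁻¹ := inv_anti₀ (by positivity) hcast
    linarith
  intro i j hij
  rcases hij.lt_or_gt with h | h
  · exact H i j h
  · exact (H j i h).symm

lemma summable_aux : Summable (fun i : ℕ+ => (((i:ℝ)) * ((i:ℝ)+1))⁻¹) := by
  have hg : Summable (fun n : ℕ => ((n:ℝ)^2)⁻¹) := by
    simpa using Real.summable_one_div_nat_pow.2 (by norm_num : 1 < 2)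
  have h1 : Summable (fun n : ℕ => ((n:ℝ) * ((n:ℝ)+1))⁻¹) := by
    refine Summable.of_nonneg_of_le (fun n => by positivity) (fun n => ?_) hg
    rcases Nat.eq_zero_or_pos n with rfl | hn
    · simp
    · have hn' : (0:ℝ) < n := by exact_mod_cast hn
      apply inv_anti₀ (by positivity)
      nlinarith
  have := h1.comp_injective (PNat.coe_injective)
  exact this

lemma gauss_integral_eq (g : ℝ → ℝ) :
    ∫ x, g x ∂gaussMeasure
      = ∫ x in Set.Icc (0:ℝ) 1, (1 / Real.log 2) * (1 / (x + 1)) * g x := by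
  have hd : Measurable fun x : ℝ => Real.toNNReal ((1 / Real.log 2) * (1 / (x + 1))) :=
    (measurable_const.mul (measurable_const.div ((measurable_id.add_const 1)))).real_toNNReal
  have heq : gaussMeasure = (volume.restrict (Set.Icc (0 : ℝ) 1)).withDensity
      (fun x => ((Real.toNNReal ((1 / Real.log 2) * (1 / (x + 1))) : ℝ≥0) : ℝ≥0∞)) := rfl
  rw [heq, integral_withDensity_eq_integral_smul hd]
  apply setIntegral_congr_fun measurableSet_Icc
  intro x hx
  have h0 : (0:ℝ) ≤ x := hx.1
  have hlog : (0:ℝ) < Real.log 2 := Real.log_pos (by norm_num)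
  have hnn : (0:ℝ) ≤ (1 / Real.log 2) * (1 / (x + 1)) := by positivity
  simp only [NNReal.smul_def, Real.coe_toNNReal _ hnn, smul_eq_mul, mul_assoc]

/-- The Gauss measure is invariant for the Markov operator `U`: for every bounded Borel
measurable `f` on `[0,1]`, `∫₀¹ Uf dγ = ∫₀¹ f dγ`. -/
theorem gaussMeasure_invariant_Uop (f : ℝ → ℝ) (hmeas : Measurable f)
    (hbdd : ∃ C : ℝ, ∀ x ∈ Set.Icc (0 : ℝ) 1, |f x| ≤ C) :
    ∫ x, Uop f x ∂gaussMeasure = ∫ x, f x ∂gaussMeasure := by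
  obtain ⟨C₀, hC₀⟩ := hbdd
  set C : ℝ := max C₀ 0 with hCdef
  have hC : ∀ x ∈ Set.Icc (0:ℝ) 1, |f x| ≤ C := fun x hx => (hC₀ x hx).trans (le_max_left _ _)
  have hCnn : (0:ℝ) ≤ C := le_max_right _ _
  have hlog : (0:ℝ) < Real.log 2 := Real.log_pos (by norm_num)
  set h : ℕ+ → ℝ → ℝ :=
    fun i x => (1 / Real.log 2) * (((x + (i:ℝ)) * (x + (i:ℝ) + 1))⁻¹ * f ((x + (i:ℝ))⁻¹))
    with hhdef
  -- measurability of each term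
  have hhm : ∀ i : ℕ+, Measurable (h i) := by
    intro i
    apply measurable_const.mul
    exact (((measurable_id.add_const (i:ℝ)).mul
      ((measurable_id.add_const (i:ℝ)).add_const 1)).inv).mul
      (hmeas.comp (measurable_id.add_const (i:ℝ)).inv)
  -- pointwise bound
  have hptw : ∀ i : ℕ+, ∀ x ∈ Set.Icc (0:ℝ) 1,
      ‖h i x‖ ≤ (1 / Real.log 2) * ((((i:ℝ)) * ((i:ℝ)+1))⁻¹ * C) := by
    intro i x hx
    have hi := pnat_pos_real i
    have hone := pnat_one_le_real i
    have hx0 : (0:ℝ) ≤ x := hx.1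
    have hx1 : x ≤ 1 := hx.2
    have h0 : (0:ℝ) < x + i := by positivity
    have h1 : (0:ℝ) < x + i + 1 := by linarith
    have hy : (x + (i:ℝ))⁻¹ ∈ Set.Icc (0:ℝ) 1 := by
      constructor
      · positivity
      · rw [inv_le_one_iff₀]; right; linarith
    have hfy : |f ((x + (i:ℝ))⁻¹)| ≤ C := hC _ hy
    have hD : ((i:ℝ)) * ((i:ℝ)+1) ≤ (x + (i:ℝ)) * (x + (i:ℝ) + 1) := by nlinarith
    have hDinv : ((x + (i:ℝ)) * (x + (i:ℝ) + 1))⁻¹ ≤ (((i:ℝ)) * ((i:ℝ)+1))⁻¹ :=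
      inv_anti₀ (by positivity) hD
    rw [Real.norm_eq_abs, hhdef]
    simp only
    rw [abs_mul, abs_mul, abs_of_pos (by positivity : (0:ℝ) < 1 / Real.log 2),
      abs_of_pos (by positivity : (0:ℝ) < ((x + (i:ℝ)) * (x + (i:ℝ) + 1))⁻¹)]
    gcongr
  -- integrability of the target function on Ioc 0 1
  have hgm : Measurable (fun u : ℝ => f u / (1 + u)) :=
    hmeas.div (measurable_const.add measurable_id)
  have hint : IntegrableOn (fun u : ℝ => f u / (1 + u)) (Set.Ioc (0:ℝ) 1) := by
    apply Integrable.mono' (integrableOn_const (C := C) measure_Ioc_lt_top.ne enorm_ne_top)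
      hgm.aestronglyMeasurable
    refine (ae_restrict_iff' measurableSet_Ioc).2 (ae_of_all _ fun u hu => ?_)
    have hu0 : (0:ℝ) < u := hu.1
    have hu1 : u ≤ 1 := hu.2
    have hfb := hC u ⟨hu0.le, hu1⟩
    have hd1 : (1:ℝ) ≤ |1 + u| := by rw [abs_of_pos (by linarith)]; linarith
    rw [Real.norm_eq_abs, abs_div]
    calc |f u| / |1 + u| ≤ |f u| := div_le_self (abs_nonneg _) hd1
      _ ≤ C := hfb
  rw [gauss_integral_eq, gauss_integral_eq]
  calc ∫ x in Set.Icc (0:ℝ) 1, (1 / Real.log 2) * (1 / (x + 1)) * Uop f x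
      = ∫ x in Set.Icc (0:ℝ) 1, ∑' i : ℕ+, h i x := by
        apply setIntegral_congr_fun measurableSet_Icc
        intro x hx
        have hx0 : (0:ℝ) ≤ x := hx.1
        simp only [Uop]
        rw [← tsum_mul_left]
        apply tsum_congr
        intro i
        have hi := pnat_pos_real i
        have h0 : (0:ℝ) < x + i := by positivity
        have h1 : (0:ℝ) < x + i + 1 := by linarith
        have hx1 : (0:ℝ) < x + 1 := by linarith
        rw [hhdef]
        simp only [one_div]
        field_simp
    _ = ∑' i : ℕ+, ∫ x in Set.Icc (0:ℝ) 1, h i x := by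
        apply integral_tsum (fun i => (hhm i).aestronglyMeasurable)
        have hbound : ∀ i : ℕ+, ∫⁻ x in Set.Icc (0:ℝ) 1, ‖h i x‖₊
            ≤ ENNReal.ofReal ((1 / Real.log 2) * ((((i:ℝ)) * ((i:ℝ)+1))⁻¹ * C)) := by
          intro i
          calc ∫⁻ x in Set.Icc (0:ℝ) 1, ‖h i x‖₊
              ≤ ∫⁻ _ in Set.Icc (0:ℝ) 1,
                ENNReal.ofReal ((1 / Real.log 2) * ((((i:ℝ)) * ((i:ℝ)+1))⁻¹ * C)) := by
                refine lintegral_mono_ae ((ae_restrict_iff' measurableSet_Icc).2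
                  (ae_of_all _ fun x hx => ?_))
                rw [← ENNReal.ofReal_coe_nnreal, coe_nnnorm]
                exact ENNReal.ofReal_le_ofReal (hptw i x hx)
            _ = ENNReal.ofReal ((1 / Real.log 2) * ((((i:ℝ)) * ((i:ℝ)+1))⁻¹ * C))
                * volume (Set.Icc (0:ℝ) 1) := setLIntegral_const _ _
            _ = ENNReal.ofReal ((1 / Real.log 2) * ((((i:ℝ)) * ((i:ℝ)+1))⁻¹ * C)) := by
                rw [Real.volume_Icc]; norm_num
        have hsummable : Summable
            (fun i : ℕ+ => (1 / Real.log 2) * ((((i:ℝ)) * ((i:ℝ)+1))⁻¹ * C)) :=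
          (summable_aux.mul_right C).mul_left _
        apply ne_top_of_le_ne_top _ (ENNReal.tsum_le_tsum hbound)
        rw [← ENNReal.ofReal_tsum_of_nonneg
          (fun i => mul_nonneg (by positivity) (mul_nonneg (by positivity) hCnn)) hsummable]
        exact ENNReal.ofReal_ne_top
    _ = ∑' i : ℕ+, (1 / Real.log 2)
          * ∫ u in Set.Ioc ((i:ℝ)+1)⁻¹ ((i:ℝ))⁻¹, f u / (1 + u) := by
        apply tsum_congr
        intro i
        rw [hhdef]
        simp only
        rw [integral_const_mul _ _, subst_lemma f i, integral_Icc_eq_integral_Ioc]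
    _ = (1 / Real.log 2) * ∑' i : ℕ+, ∫ u in Set.Ioc ((i:ℝ)+1)⁻¹ ((i:ℝ))⁻¹, f u / (1 + u) :=
        tsum_mul_left
    _ = (1 / Real.log 2) * ∫ u in Set.Ioc (0:ℝ) 1, f u / (1 + u) := by
        congr 1
        rw [← iUnion_Ioc_eq] at hint ⊢
        exact (integral_iUnion (fun i => measurableSet_Ioc) pairwise_disjoint_Ioc hint).symm
    _ = ∫ x in Set.Icc (0:ℝ) 1, (1 / Real.log 2) * (1 / (x + 1)) * f x := by
        rw [← integral_Icc_eq_integral_Ioc, ← integral_const_mul _ _]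
        apply setIntegral_congr_fun measurableSet_Icc
        intro x hx
        simp only []
        rw [add_comm 1 x]
        ring
end
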